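/- There exist six pairwise distinct points A, B, C, D, E, F in ℝ² such that the perfect matching M₁ = {(A,B), (C,D), (E,F)} is 2-local maximum (every two of its edges form a maximum-length perfect matching on their 4 endpoints) and yet the perfect matching M₂ = {(A,F), (B,C), (D,E)} satisfies w(M₁) < 0.93 · w(M₂), where w denotes total edge length. In particular, μ₂ < 0.93: a 2-local maximum matching need not approximate a global maximum matching within ratio 0.93. -/

import Mathlib

noncomputable section

/-- The Euclidean plane. -/
abbrev Pt : Type := EuclideanSpace ℝ (Fin 2)

/-- A point of the plane from two coordinates. -/
def P (x y : ℝ) : Pt := !₂[x, y]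

lemma dist_P (a b c d : ℝ) :
    dist (P a b) (P c d) = Real.sqrt ((a-c)^2+(b-d)^2) := by
  rw [EuclideanSpace.dist_eq]
  simp [P, Fin.sum_univ_two, Real.dist_eq, sq_abs]

lemma P_ne {a b c d : ℝ} (h : a ≠ c) : P a b ≠ P c d := fun he => h (by simpa [P] using congrArg (fun p : Pt => p 0) he)

lemma sqrt_bounds (x l u : ℝ) (hl : 0 ≤ l) (hu : 0 ≤ u)
    (h1 : l^2 ≤ x) (h2 : x ≤ u^2) :
    l ≤ Real.sqrt x ∧ Real.sqrt x ≤ u := by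
  constructor
  · calc l = Real.sqrt (l^2) := (Real.sqrt_sq hl).symm
    _ ≤ Real.sqrt x := Real.sqrt_le_sqrt h1
  · calc Real.sqrt x ≤ Real.sqrt (u^2) := Real.sqrt_le_sqrt h2
    _ = u := Real.sqrt_sq hu

theorem mu2_upper_bound : ∃ A B C D E F : Pt,
    ([A, B, C, D, E, F] : List Pt).Pairwise (· ≠ ·) ∧
    -- M₁ = {(A,B), (C,D), (E,F)} is 2-local maximum:
    (dist A C + dist B D ≤ dist A B + dist C D) ∧
    (dist A D + dist C B ≤ dist A B + dist C D) ∧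
    (dist A E + dist B F ≤ dist A B + dist E F) ∧
    (dist A F + dist E B ≤ dist A B + dist E F) ∧
    (dist C E + dist D F ≤ dist C D + dist E F) ∧
    (dist C F + dist E D ≤ dist C D + dist E F) ∧
    -- but M₂ = {(A,F), (B,C), (D,E)} is much longer:
    dist A B + dist C D + dist E F < 0.93 * (dist A F + dist B C + dist D E) := by
  refine ⟨P 64 1133, P 323 (-1080), P (-419) (-177), P (-77) (-246),
      P (-1709) (-445), P (-408) (-179), ?_, ?_⟩
  · refine List.Pairwise.cons ?_ (List.Pairwise.cons ?_ (List.Pairwise.cons ?_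
      (List.Pairwise.cons ?_ (List.Pairwise.cons ?_ (List.pairwise_singleton _ _))))) <;>
    · intro x hx
      fin_cases hx <;> exact P_ne (by norm_num)
  set A : Pt := P 64 1133
  set B : Pt := P 323 (-1080)
  set C : Pt := P (-419) (-177)
  set D : Pt := P (-77) (-246)
  set E : Pt := P (-1709) (-445)
  set F : Pt := P (-408) (-179)
  have hAC : dist A C = Real.sqrt 1949389 := by rw [dist_P]; norm_num
  have bAC := sqrt_bounds 1949389 (13962/10) (13963/10) (by norm_num) (by norm_num) (by norm_num) (by norm_num)
  have hBD : dist B D = Real.sqrt 855556 := by rw [dist_P]; norm_num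
  have bBD := sqrt_bounds 855556 (9249/10) (9250/10) (by norm_num) (by norm_num) (by norm_num) (by norm_num)
  have hAB : dist A B = Real.sqrt 4964450 := by rw [dist_P]; norm_num
  have bAB := sqrt_bounds 4964450 (22281/10) (22282/10) (by norm_num) (by norm_num) (by norm_num) (by norm_num)
  have hCD : dist C D = Real.sqrt 121725 := by rw [dist_P]; norm_num
  have bCD := sqrt_bounds 121725 (3488/10) (3489/10) (by norm_num) (by norm_num) (by norm_num) (by norm_num)
  have hAD : dist A D = Real.sqrt 1921522 := by rw [dist_P]; norm_num
  have bAD := sqrt_bounds 1921522 (13861/10) (13862/10) (by norm_num) (by norm_num) (by norm_num) (by norm_num)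
  have hCB : dist C B = Real.sqrt 1365973 := by rw [dist_P]; norm_num
  have bCB := sqrt_bounds 1365973 (11687/10) (11688/10) (by norm_num) (by norm_num) (by norm_num) (by norm_num)
  have hAE : dist A E = Real.sqrt 5633613 := by rw [dist_P]; norm_num
  have bAE := sqrt_bounds 5633613 (23735/10) (23736/10) (by norm_num) (by norm_num) (by norm_num) (by norm_num)
  have hBF : dist B F = Real.sqrt 1346162 := by rw [dist_P]; norm_num
  have bBF := sqrt_bounds 1346162 (11602/10) (11603/10) (by norm_num) (by norm_num) (by norm_num) (by norm_num)
  have hEF : dist E F = Real.sqrt 1763357 := by rw [dist_P]; norm_num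
  have bEF := sqrt_bounds 1763357 (13279/10) (13280/10) (by norm_num) (by norm_num) (by norm_num) (by norm_num)
  have hAF : dist A F = Real.sqrt 1944128 := by rw [dist_P]; norm_num
  have bAF := sqrt_bounds 1944128 (13943/10) (13944/10) (by norm_num) (by norm_num) (by norm_num) (by norm_num)
  have hEB : dist E B = Real.sqrt 4532249 := by rw [dist_P]; norm_num
  have bEB := sqrt_bounds 4532249 (21289/10) (21290/10) (by norm_num) (by norm_num) (by norm_num) (by norm_num)
  have hCE : dist C E = Real.sqrt 1735924 := by rw [dist_P]; norm_num
  have bCE := sqrt_bounds 1735924 (13175/10) (13176/10) (by norm_num) (by norm_num) (by norm_num) (by norm_num)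
  have hDF : dist D F = Real.sqrt 114050 := by rw [dist_P]; norm_num
  have bDF := sqrt_bounds 114050 (3377/10) (3378/10) (by norm_num) (by norm_num) (by norm_num) (by norm_num)
  have hCF : dist C F = Real.sqrt 125 := by rw [dist_P]; norm_num
  have bCF := sqrt_bounds 125 (111/10) (112/10) (by norm_num) (by norm_num) (by norm_num) (by norm_num)
  have hED : dist E D = Real.sqrt 2703025 := by rw [dist_P]; norm_num
  have bED := sqrt_bounds 2703025 (16440/10) (16441/10) (by norm_num) (by norm_num) (by norm_num) (by norm_num)
  have hBC : dist B C = Real.sqrt 1365973 := by rw [dist_P]; norm_num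
  have bBC := sqrt_bounds 1365973 (11687/10) (11688/10) (by norm_num) (by norm_num) (by norm_num) (by norm_num)
  have hDE : dist D E = Real.sqrt 2703025 := by rw [dist_P]; norm_num
  have bDE := sqrt_bounds 2703025 (16440/10) (16441/10) (by norm_num) (by norm_num) (by norm_num) (by norm_num)
  have h093 : (0.93:ℝ) = 93/100 := by norm_num
  refine ⟨?_, ?_, ?_, ?_, ?_, ?_, ?_⟩ <;>
    simp only [hAC, hBD, hAB, hCD, hAD, hCB, hAE, hBF, hEF, hAF, hEB, hCE, hDF, hCF, hED,
      hBC, hDE, h093]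
  · linarith [bAC.2, bBD.2, bAB.1, bCD.1]
  · linarith [bAD.2, bCB.2, bAB.1, bCD.1]
  · linarith [bAE.2, bBF.2, bAB.1, bEF.1]
  · linarith [bAF.2, bEB.2, bAB.1, bEF.1]
  · linarith [bCE.2, bDF.2, bCD.1, bEF.1]
  · linarith [bCF.2, bED.2, bCD.1, bEF.1]
  · linarith [bAB.2, bCD.2, bEF.2, bAF.1, bBC.1, bDE.1]
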